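/- Let X, Y be Polish spaces and assume X satisfies the Lebesgue differentiation property: for any probability measures ρ ≪ λ on X, the limit lim_{r→0} ρ(B_r(x))/λ(B_r(x)) exists for λ-a.e. x and defines a version of dρ/dλ. Let π be a probability measure on X × Y with first marginal μ, and for x ∈ supp μ and r > 0 define π_x^{(r)}(C) := π(B_r(x) × C)/μ(B_r(x)). Then there is a Borel set X₀ ⊆ supp μ with μ(X₀) = 1 such that for all x ∈ X₀ the weak limit π_x := lim_{r→0} π_x^{(r)} exists in P(Y), and x ↦ π_x defines a regular conditional probability (disintegration) of π given x. -/

import Mathlib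

set_option linter.unusedSectionVars false
set_option maxHeartbeats 1000000

open MeasureTheory Set Metric Filter Topology ENNReal ProbabilityTheory

namespace CondDiffAux

section TestFunctions
variable {Y : Type*} [MetricSpace Y] [MeasurableSpace Y] [BorelSpace Y]


variable {Y : Type*} [MetricSpace Y] [MeasurableSpace Y] [BorelSpace Y]

/-- Union of basic balls indexed by a finite set of pairs. -/
def UU (e : ℕ → Y) (s : Finset (ℕ × ℕ)) : Set Y :=
  ⋃ p ∈ s, ball (e p.1) (1 / (p.2 + 1))

lemma isOpen_UU (e : ℕ → Y) (s : Finset (ℕ × ℕ)) : IsOpen (UU e s) :=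
  isOpen_biUnion fun _ _ => isOpen_ball

/-- Test functions approximating indicators of `UU e s` from below. -/
noncomputable def tf (e : ℕ → Y) (s : Finset (ℕ × ℕ)) (m : ℕ) : Y → ℝ :=
  fun y => min 1 (m * infDist y (UU e s)ᶜ)

lemma tf_continuous (e : ℕ → Y) (s : Finset (ℕ × ℕ)) (m : ℕ) : Continuous (tf e s m) :=
  continuous_const.min (continuous_const.mul (continuous_infDist_pt _))

lemma tf_nonneg (e : ℕ → Y) (s : Finset (ℕ × ℕ)) (m : ℕ) (y : Y) : 0 ≤ tf e s m y :=
  le_min zero_le_one (mul_nonneg (Nat.cast_nonneg m) infDist_nonneg)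

lemma tf_le_one (e : ℕ → Y) (s : Finset (ℕ × ℕ)) (m : ℕ) (y : Y) : tf e s m y ≤ 1 :=
  min_le_left _ _

lemma tf_zero_of_not_mem {e : ℕ → Y} {s : Finset (ℕ × ℕ)} {m : ℕ} {y : Y}
    (hy : y ∉ UU e s) : tf e s m y = 0 := by
  have : infDist y (UU e s)ᶜ = 0 := infDist_zero_of_mem hy
  simp [tf, this]

lemma ofReal_tf_le_indicator (e : ℕ → Y) (s : Finset (ℕ × ℕ)) (m : ℕ) (y : Y) :
    ENNReal.ofReal (tf e s m y) ≤ (UU e s).indicator 1 y := by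
  by_cases hy : y ∈ UU e s
  · simp only [indicator_of_mem hy, Pi.one_apply]
    exact ENNReal.ofReal_le_one.mpr (tf_le_one e s m y)
  · simp [tf_zero_of_not_mem hy, indicator_of_notMem hy]

lemma tf_monotone (e : ℕ → Y) (s : Finset (ℕ × ℕ)) (y : Y) :
    Monotone fun m : ℕ => ENNReal.ofReal (tf e s m y) := by
  intro m m' hm
  apply ENNReal.ofReal_le_ofReal
  exact min_le_min le_rfl (mul_le_mul_of_nonneg_right (by exact_mod_cast hm) infDist_nonneg)

lemma iSup_ofReal_tf {e : ℕ → Y} {s : Finset (ℕ × ℕ)} (hne : ((UU e s)ᶜ).Nonempty) (y : Y) :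
    ⨆ m : ℕ, ENNReal.ofReal (tf e s m y) = (UU e s).indicator 1 y := by
  by_cases hy : y ∈ UU e s
  · have hd : 0 < infDist y (UU e s)ᶜ :=
      ((isOpen_UU e s).isClosed_compl.notMem_iff_infDist_pos hne).1 (by simpa using hy)
    rw [indicator_of_mem hy, Pi.one_apply]
    refine le_antisymm (iSup_le fun m => ENNReal.ofReal_le_one.mpr (tf_le_one e s m y)) ?_
    obtain ⟨m, hm⟩ := exists_nat_ge (1 / infDist y (UU e s)ᶜ)
    have h1 : (1 : ℝ) ≤ m * infDist y (UU e s)ᶜ := (div_le_iff₀ hd).1 hm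
    refine le_iSup_of_le m ?_
    rw [tf, min_eq_left h1]
    simp
  · simp [tf_zero_of_not_mem hy, indicator_of_notMem hy]

lemma lintegral_tf_le (ν : Measure Y) (e : ℕ → Y) (s : Finset (ℕ × ℕ)) (m : ℕ) :
    ∫⁻ y, ENNReal.ofReal (tf e s m y) ∂ν ≤ ν (UU e s) := by
  refine (lintegral_mono (ofReal_tf_le_indicator e s m)).trans ?_
  rw [lintegral_indicator_one (isOpen_UU e s).measurableSet]

lemma iSup_lintegral_tf (ν : Measure Y) {e : ℕ → Y} {s : Finset (ℕ × ℕ)}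
    (hne : ((UU e s)ᶜ).Nonempty) :
    ⨆ m : ℕ, ∫⁻ y, ENNReal.ofReal (tf e s m y) ∂ν = ν (UU e s) := by
  rw [← lintegral_iSup (fun m => (tf_continuous e s m).measurable.ennreal_ofReal) (fun m m' h y => tf_monotone e s y h)]
  simp_rw [iSup_ofReal_tf hne]
  exact lintegral_indicator_one (isOpen_UU e s).measurableSet


open Classical in
lemma meas_open_le (ν : Measure Y) {e : ℕ → Y} (he : DenseRange e) {G : Set Y}
    (hG : IsOpen G) (hGc : Gᶜ.Nonempty) :
    ν G ≤ ⨆ (s : Finset (ℕ × ℕ)) (_ : UU e s ⊆ G) (m : ℕ),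
      ∫⁻ y, ENNReal.ofReal (tf e s m y) ∂ν := by
  classical
  set A : ℕ × ℕ → Set Y := fun p =>
    if ball (e p.1) (1 / (p.2 + 1)) ⊆ G then ball (e p.1) (1 / (p.2 + 1)) else ∅ with hA
  have hcover : G = ⋃ p, A p := by
    apply Subset.antisymm
    · intro y hy
      obtain ⟨ε, hε, hball⟩ := Metric.isOpen_iff.1 hG y hy
      obtain ⟨k, hk⟩ := exists_nat_one_div_lt (half_pos hε)
      have hkpos : (0 : ℝ) < 1 / (k + 1) := by positivity
      obtain ⟨i, hi⟩ := he.exists_dist_lt y hkpos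
      have hsub : ball (e i) (1 / (k + 1)) ⊆ G := by
        intro z hz
        apply hball
        have : dist z y ≤ dist z (e i) + dist (e i) y := dist_triangle _ _ _
        have h2 : dist z y < 1 / (k + 1) + 1 / (k + 1) := by
          refine lt_of_le_of_lt this (add_lt_add (mem_ball.1 hz) ?_)
          rwa [dist_comm]
        have : (1 : ℝ) / (k + 1) + 1 / (k + 1) < ε := by linarith
        exact mem_ball.2 (h2.trans this)
      refine mem_iUnion.2 ⟨(i, k), ?_⟩
      simp only [hA, if_pos hsub]
      exact mem_ball.2 hi
    · refine iUnion_subset fun p => ?_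
      simp only [hA]
      split_ifs with h
      · exact h
      · exact empty_subset _
  have hdir : Directed (· ⊆ ·) (fun s : Finset (ℕ × ℕ) => ⋃ p ∈ s, A p) := by
    intro s t
    exact ⟨s ∪ t, biUnion_subset_biUnion_left (s.subset_union_left),
      biUnion_subset_biUnion_left (s.subset_union_right)⟩
  have hU : (⋃ s : Finset (ℕ × ℕ), ⋃ p ∈ s, A p) = ⋃ p, A p := by
    apply Subset.antisymm
    · exact iUnion_subset fun s => iUnion₂_subset fun p _ => subset_iUnion A p
    · exact iUnion_subset fun p => subset_trans
        (by simp : A p ⊆ ⋃ q ∈ ({p} : Finset (ℕ × ℕ)), A q)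
        (subset_iUnion (fun s : Finset (ℕ × ℕ) => ⋃ q ∈ s, A q) {p})
  calc ν G = ⨆ s : Finset (ℕ × ℕ), ν (⋃ p ∈ s, A p) := by
        rw [hcover, ← hU, hdir.measure_iUnion]
    _ ≤ _ := by
        refine iSup_le fun s => ?_
        set s' : Finset (ℕ × ℕ) := s.filter (fun p => ball (e p.1) (1 / (p.2 + 1)) ⊆ G) with hs'
        have hAU : (⋃ p ∈ s, A p) = UU e s' := by
          apply Subset.antisymm
          · refine iUnion₂_subset fun p hp => ?_
            simp only [hA]
            split_ifs with h
            · have hps' : p ∈ s' := by rw [hs', Finset.mem_filter]; exact ⟨hp, h⟩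
              exact subset_iUnion₂ (s := fun p (_ : p ∈ s') => ball (e p.1) (1/(p.2+1))) p hps'
            · exact empty_subset _
          · refine iUnion₂_subset fun p hp => ?_
            rw [hs', Finset.mem_filter] at hp
            refine subset_trans ?_ (subset_iUnion₂ (s := fun p (_ : p ∈ s) => A p) p hp.1)
            simp only [hA, if_pos hp.2]
            exact Subset.rfl
        have hsub : UU e s' ⊆ G := by
          refine iUnion₂_subset fun p hp => ?_
          rw [hs', Finset.mem_filter] at hp
          exact hp.2
        have hne : ((UU e s')ᶜ).Nonempty := hGc.mono (compl_subset_compl.2 hsub)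
        rw [hAU, ← iSup_lintegral_tf ν hne]
        refine iSup_le fun m => ?_
        refine le_iSup_of_le s' ?_
        rw [iSup_pos hsub]
        exact le_iSup (fun m => ∫⁻ y, ENNReal.ofReal (tf e s' m y) ∂ν) m


/-- Weak convergence of probability measures from convergence of the countable family of
test-function lintegrals. -/
lemma tendsto_integral_of_tests {ι : Type*} {L : Filter ι} [L.IsCountablyGenerated]
    {e : ℕ → Y} (he : DenseRange e) (ν : ι → Measure Y) (νlim : Measure Y)
    [∀ i, IsProbabilityMeasure (ν i)] [IsProbabilityMeasure νlim]
    (hconv : ∀ (s : Finset (ℕ × ℕ)) (m : ℕ),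
      Tendsto (fun i => ∫⁻ y, ENNReal.ofReal (tf e s m y) ∂(ν i)) L
        (𝓝 (∫⁻ y, ENNReal.ofReal (tf e s m y) ∂νlim)))
    (g : BoundedContinuousFunction Y ℝ) :
    Tendsto (fun i => ∫ y, g y ∂(ν i)) L (𝓝 (∫ y, g y ∂νlim)) := by
  rw [tendsto_iff_seq_tendsto]
  intro u hu
  have key : ∀ (f : BoundedContinuousFunction Y ℝ), 0 ≤ f →
      ∫ y, f y ∂νlim ≤ atTop.liminf fun n => ∫ y, f y ∂(ν (u n)) := by
    intro f hf
    apply integral_le_liminf_integral_of_forall_isOpen_measure_le_liminf_measure hf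
    intro G hG
    by_cases hGc : Gᶜ.Nonempty
    · refine (meas_open_le νlim he hG hGc).trans ?_
      refine iSup_le fun s => iSup_le fun hs => iSup_le fun m => ?_
      have h1 : Tendsto (fun n => ∫⁻ y, ENNReal.ofReal (tf e s m y) ∂(ν (u n))) atTop
          (𝓝 (∫⁻ y, ENNReal.ofReal (tf e s m y) ∂νlim)) := (hconv s m).comp hu
      rw [← h1.liminf_eq]
      refine liminf_le_liminf (Eventually.of_forall fun n => ?_)
      exact (lintegral_tf_le _ e s m).trans (measure_mono hs)
    · have hGuniv : G = univ := by
        rw [not_nonempty_iff_eq_empty] at hGc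
        rw [← compl_compl G, hGc, compl_empty]
      subst hGuniv
      simp only [measure_univ]
      rw [liminf_const]
  exact BoundedContinuousFunction.tendsto_integral_of_forall_integral_le_liminf_integral key g


end TestFunctions

lemma lintegral_half {Y : Type*} [MeasurableSpace Y] (ν : Measure Y) [IsProbabilityMeasure ν]
    {t : Y → ℝ} (ht : Measurable t) (h0 : ∀ y, 0 ≤ t y) :
    ∫⁻ y, ENNReal.ofReal ((t y + 1)/2) ∂ν = (∫⁻ y, ENNReal.ofReal (t y) ∂ν + 1) / 2 := by
  have hpt : ∀ y, ENNReal.ofReal ((t y + 1)/2) = (ENNReal.ofReal (t y) + 1) / 2 := by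
    intro y
    rw [ENNReal.ofReal_div_of_pos two_pos, ENNReal.ofReal_add (h0 y) zero_le_one]
    norm_num
  simp_rw [hpt, div_eq_mul_inv]
  rw [lintegral_mul_const (f := fun y => ENNReal.ofReal (t y) + 1) _ (ht.ennreal_ofReal.add measurable_const),
    lintegral_add_right _ measurable_const, lintegral_one, measure_univ]

lemma tendsto_of_half {ι : Type*} {L : Filter ι} {a : ι → ℝ≥0∞} {b : ℝ≥0∞}
    (h : Tendsto (fun i => (a i + 1)/2) L (𝓝 ((b + 1)/2))) : Tendsto a L (𝓝 b) := by
  have cont : Continuous (fun z : ℝ≥0∞ => z * 2 - 1) :=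
    (ENNReal.continuous_sub_right 1).comp (ENNReal.continuous_mul_const (by norm_num))
  have h2 := (cont.tendsto _).comp h
  have hsimp : ∀ c : ℝ≥0∞, ((c + 1)/2) * 2 - 1 = c := by
    intro c
    rw [ENNReal.div_mul_cancel (by norm_num) (by norm_num), ENNReal.add_sub_cancel_right one_ne_top]
  simp only [Function.comp_def, hsimp] at h2
  exact h2


/-- Core differentiation step: for a fixed continuous function `f` with `1/2 ≤ f ≤ 1`,
for `μ`-a.e. `x` the `f`-lintegrals of the normalized restricted measures converge to the
`f`-lintegral of the conditional kernel at `x`. -/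
lemma aeTendsto
    {X Y : Type*} [MetricSpace X] [TopologicalSpace.SeparableSpace X] [CompleteSpace X]
    [MeasurableSpace X] [BorelSpace X]
    [MetricSpace Y] [TopologicalSpace.SeparableSpace Y] [CompleteSpace Y]
    [MeasurableSpace Y] [BorelSpace Y] [Nonempty Y]
    (hLeb : ∀ (ρ lam : Measure X), IsProbabilityMeasure ρ → IsProbabilityMeasure lam →
      ρ ≪ lam →
      ∀ᵐ x ∂lam, Tendsto (fun r : ℝ => ρ (ball x r) / lam (ball x r)) (𝓝[>] 0)
        (𝓝 (ρ.rnDeriv lam x)))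
    (π : Measure (X × Y)) [IsProbabilityMeasure π]
    (μ : Measure X) (hμ : π.map Prod.fst = μ) [IsProbabilityMeasure μ]
    (f : Y → ℝ) (hf : Continuous f) (hf2 : ∀ y, (1 : ℝ)/2 ≤ f y) (hf1 : ∀ y, f y ≤ 1) :
    ∀ᵐ x ∂μ, Tendsto
      (fun r : ℝ => ∫⁻ y, ENNReal.ofReal (f y)
        ∂(((μ (ball x r))⁻¹ • π.restrict (ball x r ×ˢ univ)).map Prod.snd))
      (𝓝[>] 0) (𝓝 (∫⁻ y, ENNReal.ofReal (f y) ∂(π.condKernel x))) := by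
  have hfst : π.fst = μ := by rw [Measure.fst, hμ]
  have hdis : μ ⊗ₘ π.condKernel = π := by rw [← hfst]; exact π.disintegrate π.condKernel
  set F : Y → ℝ≥0∞ := fun y => ENNReal.ofReal (f y) with hF
  have hFmeas : Measurable F := hf.measurable.ennreal_ofReal
  have hFle : ∀ y, F y ≤ 1 := fun y => ENNReal.ofReal_le_one.mpr (hf1 y)
  have hFge : ∀ y, ENNReal.ofReal ((1:ℝ)/2) ≤ F y := fun y => ENNReal.ofReal_le_ofReal (hf2 y)
  set g : X → ℝ≥0∞ := fun x => ∫⁻ y, F y ∂(π.condKernel x) with hg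
  have hgmeas : Measurable g :=
    Measurable.lintegral_kernel_prod_right (f := fun _ y => F y) (hFmeas.comp measurable_snd)
  have hgle : ∀ x, g x ≤ 1 := by
    intro x
    calc ∫⁻ y, F y ∂(π.condKernel x) ≤ ∫⁻ _, 1 ∂(π.condKernel x) :=
          lintegral_mono fun y => hFle y
      _ = 1 := by simp
  set ρ : Measure X := μ.withDensity g with hρ
  set m : ℝ≥0∞ := ρ univ with hm
  have hmval : m = ∫⁻ x, g x ∂μ := by
    rw [hm, hρ, withDensity_apply _ MeasurableSet.univ, setLIntegral_univ]
  have hm1 : m ≤ 1 := by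
    rw [hmval]
    calc ∫⁻ x, g x ∂μ ≤ ∫⁻ _, 1 ∂μ := lintegral_mono hgle
      _ = 1 := by simp
  have hmtop : m ≠ ∞ := (hm1.trans_lt one_lt_top).ne
  have hm0 : m ≠ 0 := by
    rw [hmval]
    intro h
    have h2 : ∫⁻ _, ENNReal.ofReal ((1:ℝ)/2) ∂μ ≤ ∫⁻ x, g x ∂μ := by
      refine lintegral_mono fun x => ?_
      calc ENNReal.ofReal ((1:ℝ)/2) = ∫⁻ _, ENNReal.ofReal ((1:ℝ)/2) ∂(π.condKernel x) := by simp
        _ ≤ g x := lintegral_mono fun y => hFge y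
    rw [h] at h2
    simp only [lintegral_const, measure_univ, mul_one, nonpos_iff_eq_zero,
      ENNReal.ofReal_eq_zero] at h2
    linarith
  set ρh : Measure X := m⁻¹ • ρ with hρh
  haveI : IsProbabilityMeasure ρh := by
    constructor
    rw [hρh, Measure.smul_apply, smul_eq_mul, ← hm, ENNReal.inv_mul_cancel hm0 hmtop]
  have hac : ρh ≪ μ := by
    intro s hs
    have := withDensity_absolutelyContinuous μ g hs
    rw [hρh, Measure.smul_apply, smul_eq_mul, hρ]
    rw [this, mul_zero]
  have hrn : ρh.rnDeriv μ =ᵐ[μ] fun x => m⁻¹ * g x := by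
    have h1 : ρh = μ.withDensity (fun x => m⁻¹ * g x) := by
      rw [hρh, hρ, ← withDensity_smul m⁻¹ hgmeas]
      rfl
    rw [h1]
    exact Measure.rnDeriv_withDensity μ (hgmeas.const_mul m⁻¹)
  have key := hLeb ρh μ inferInstance inferInstance hac
  filter_upwards [key, hrn] with x hx hxe
  rw [hxe] at hx
  -- multiply by m
  have h2 := ENNReal.Tendsto.const_mul hx (Or.inr hmtop)
  have hlim : m * (m⁻¹ * g x) = g x := by
    rw [← mul_assoc, ENNReal.mul_inv_cancel hm0 hmtop, one_mul]
  rw [hlim] at h2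
  -- rewrite the function
  have hfun : ∀ r : ℝ, ∫⁻ y, F y
      ∂(((μ (ball x r))⁻¹ • π.restrict (ball x r ×ˢ univ)).map Prod.snd)
      = m * (ρh (ball x r) / μ (ball x r)) := by
    intro r
    have hB : MeasurableSet (ball x r) := measurableSet_ball
    have e1 : ρ (ball x r) = ∫⁻ p in ball x r ×ˢ univ, F p.2 ∂π := by
      rw [hρ, withDensity_apply _ hB]
      conv_rhs => rw [← hdis]
      rw [Measure.setLIntegral_compProd (f := fun p : X × Y => F p.2)
        (hFmeas.comp measurable_snd) hB MeasurableSet.univ]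
      simp only [Measure.restrict_univ]
      rfl
    have e2 : ∫⁻ y, F y ∂(((μ (ball x r))⁻¹ • π.restrict (ball x r ×ˢ univ)).map Prod.snd)
        = (μ (ball x r))⁻¹ * ρ (ball x r) := by
      rw [Measure.map_smul, lintegral_smul_measure,
        lintegral_map hFmeas measurable_snd, e1, smul_eq_mul]
    rw [e2]
    have e3 : ρh (ball x r) = m⁻¹ * ρ (ball x r) := by
      rw [hρh, Measure.smul_apply, smul_eq_mul]
    rw [e3, div_eq_mul_inv, ← mul_assoc, ← mul_assoc, ENNReal.mul_inv_cancel hm0 hmtop,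
      one_mul, mul_comm]
  have := h2.congr (fun r => (hfun r).symm)
  exact this

end CondDiffAux

open CondDiffAux


/-- Conditional differentiation of measures: under the Lebesgue differentiation property
on X, the normalized measures π(B_r(x) × ·)/μ(B_r(x)) converge weakly, for μ-a.e. x in
the support of μ, to a regular conditional probability (disintegration) of π given x. -/
theorem conditional_differentiation_of_measures
    {X Y : Type*} [MetricSpace X] [TopologicalSpace.SeparableSpace X] [CompleteSpace X]
    [MeasurableSpace X] [BorelSpace X]
    [MetricSpace Y] [TopologicalSpace.SeparableSpace Y] [CompleteSpace Y]
    [MeasurableSpace Y] [BorelSpace Y]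
    -- Lebesgue differentiation property on X:
    (hLeb : ∀ (ρ lam : Measure X), IsProbabilityMeasure ρ → IsProbabilityMeasure lam →
      ρ ≪ lam →
      ∀ᵐ x ∂lam, Tendsto (fun r : ℝ => ρ (ball x r) / lam (ball x r)) (𝓝[>] 0)
        (𝓝 (ρ.rnDeriv lam x)))
    (π : Measure (X × Y)) [IsProbabilityMeasure π]
    (μ : Measure X) (hμ : π.map Prod.fst = μ) :
    ∃ (X₀ : Set X) (κ : X → Measure Y),
      MeasurableSet X₀ ∧ X₀ ⊆ {x : X | ∀ r : ℝ, 0 < r → 0 < μ (ball x r)} ∧ μ X₀ = 1 ∧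
      (∀ x ∈ X₀, IsProbabilityMeasure (κ x)) ∧
      -- weak convergence of π(B_r(x) × ·)/μ(B_r(x)) to κ x for every x ∈ X₀
      (∀ x ∈ X₀, ∀ g : BoundedContinuousFunction Y ℝ,
        Tendsto
          (fun r : ℝ =>
            ∫ y, g y ∂(((μ (ball x r))⁻¹ • π.restrict (ball x r ×ˢ univ)).map Prod.snd))
          (𝓝[>] 0) (𝓝 (∫ y, g y ∂(κ x)))) ∧
      -- κ is a disintegration (regular conditional probability) of π given x
      (∀ (A : Set X) (C : Set Y), MeasurableSet A → MeasurableSet C →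
        π (A ×ˢ C) = ∫⁻ x in A, κ x C ∂μ) := by
  classical
  -- nonemptiness
  have hne : Nonempty (X × Y) := by
    by_contra h
    rw [not_nonempty_iff] at h
    have h1 : π univ = 1 := measure_univ
    rw [Set.univ_eq_empty_iff.2 h, measure_empty] at h1
    exact zero_ne_one h1
  haveI : Nonempty Y := ⟨hne.some.2⟩
  haveI : IsProbabilityMeasure μ := hμ ▸ Measure.isProbabilityMeasure_map measurable_fst.aemeasurable
  have hfst : π.fst = μ := by rw [Measure.fst, hμ]
  have hdis : μ ⊗ₘ π.condKernel = π := by rw [← hfst]; exact π.disintegrate π.condKernel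
  set e : ℕ → Y := TopologicalSpace.denseSeq Y with he_def
  have he : DenseRange e := TopologicalSpace.denseRange_denseSeq Y
  -- the support-like set
  set S : Set X := {x : X | ∀ r : ℝ, 0 < r → 0 < μ (ball x r)} with hS_def
  have hScopen : IsOpen Sᶜ := by
    rw [Metric.isOpen_iff]
    intro x hx
    simp only [hS_def, mem_compl_iff, mem_setOf_eq, not_forall] at hx
    obtain ⟨r, hr, hr0⟩ := hx
    have hr0' : μ (ball x r) = 0 := by
      simpa [pos_iff_ne_zero] using hr0
    refine ⟨r/2, half_pos hr, fun y hy => ?_⟩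
    simp only [hS_def, mem_compl_iff, mem_setOf_eq, not_forall]
    refine ⟨r/2, half_pos hr, ?_⟩
    have hsub : ball y (r/2) ⊆ ball x r := by
      intro z hz
      rw [mem_ball] at *
      calc dist z x ≤ dist z y + dist y x := dist_triangle _ _ _
        _ < r/2 + r/2 := add_lt_add hz hy
        _ = r := by ring
    simp [measure_mono_null hsub hr0']
  have hSmeas : MeasurableSet S := by
    simpa using hScopen.measurableSet.compl
  have hScnull : μ Sᶜ = 0 := by
    refine measure_null_of_locally_null _ fun x hx => ?_
    simp only [hS_def, mem_compl_iff, mem_setOf_eq, not_forall] at hx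
    obtain ⟨r, hr, hr0⟩ := hx
    have hr0' : μ (ball x r) = 0 := by simpa [pos_iff_ne_zero] using hr0
    exact ⟨ball x r, mem_nhdsWithin_of_mem_nhds (ball_mem_nhds x hr), hr0'⟩
  -- a.e. sets for each test function
  set fj : Finset (ℕ × ℕ) × ℕ → Y → ℝ := fun j y => (tf e j.1 j.2 y + 1)/2 with hfj_def
  have hfj_cont : ∀ j, Continuous (fj j) :=
    fun j => ((tf_continuous e j.1 j.2).add continuous_const).div_const 2
  have hfj_half : ∀ j y, (1:ℝ)/2 ≤ fj j y := by
    intro j y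
    have := tf_nonneg e j.1 j.2 y
    simp only [hfj_def]
    linarith
  have hfj_one : ∀ j y, fj j y ≤ 1 := by
    intro j y
    have := tf_le_one e j.1 j.2 y
    simp only [hfj_def]
    linarith
  set P : Finset (ℕ × ℕ) × ℕ → X → Prop := fun j x => Tendsto
      (fun r : ℝ => ∫⁻ y, ENNReal.ofReal (fj j y)
        ∂(((μ (ball x r))⁻¹ • π.restrict (ball x r ×ˢ univ)).map Prod.snd))
      (𝓝[>] 0) (𝓝 (∫⁻ y, ENNReal.ofReal (fj j y) ∂(π.condKernel x))) with hP_def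
  have hPae : ∀ j, ∀ᵐ x ∂μ, P j x := fun j =>
    aeTendsto hLeb π μ hμ (fj j) (hfj_cont j) (hfj_half j) (hfj_one j)
  set E : Finset (ℕ × ℕ) × ℕ → Set X := fun j => (toMeasurable μ {x | ¬ P j x})ᶜ with hE_def
  have hEmeas : ∀ j, MeasurableSet (E j) := fun j =>
    (measurableSet_toMeasurable _ _).compl
  have hEnull : ∀ j, μ (E j)ᶜ = 0 := by
    intro j
    rw [hE_def]
    simp only [compl_compl]
    rw [measure_toMeasurable]
    exact (ae_iff).1 (hPae j)
  have hEP : ∀ j, ∀ x ∈ E j, P j x := by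
    intro j x hx
    by_contra h
    exact hx (subset_toMeasurable μ _ h)
  refine ⟨S ∩ ⋂ j, E j, fun x => π.condKernel x, ?_, inter_subset_left, ?_, ?_, ?_, ?_⟩
  · exact hSmeas.inter (MeasurableSet.iInter hEmeas)
  · rw [← prob_compl_eq_zero_iff (hSmeas.inter (MeasurableSet.iInter hEmeas))]
    rw [compl_inter]
    refine measure_union_null hScnull ?_
    rw [compl_iInter]
    exact measure_iUnion_null fun j => hEnull j
  · exact fun x _ => inferInstance
  · -- weak convergence
    rintro x ⟨hxS, hxE⟩ g
    rw [mem_iInter] at hxE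
    have hxS' : ∀ r : ℝ, 0 < r → 0 < μ (ball x r) := hxS
    -- the (possibly fixed-up) family of measures
    set ν : ℝ → Measure Y := fun r =>
      if 0 < r then ((μ (ball x r))⁻¹ • π.restrict (ball x r ×ˢ univ)).map Prod.snd
      else π.condKernel x with hν_def
    have hνpos : ∀ r : ℝ, 0 < r →
        ν r = ((μ (ball x r))⁻¹ • π.restrict (ball x r ×ˢ univ)).map Prod.snd :=
      fun r hr => if_pos hr
    have hπB : ∀ B : Set X, MeasurableSet B → π (B ×ˢ univ) = μ B := by
      intro B hB
      rw [← hμ, Measure.map_apply measurable_fst hB, ← prod_univ]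
    haveI : ∀ r : ℝ, IsProbabilityMeasure (ν r) := by
      intro r
      by_cases hr : 0 < r
      · rw [hνpos r hr]
        constructor
        rw [Measure.map_apply measurable_snd MeasurableSet.univ]
        simp only [preimage_univ, Measure.smul_apply, smul_eq_mul]
        rw [Measure.restrict_apply_univ, hπB _ measurableSet_ball]
        exact ENNReal.inv_mul_cancel (hxS' r hr).ne' (measure_ne_top μ _)
      · have hnr : ν r = π.condKernel x := if_neg hr
        rw [hnr]
        infer_instance
    have hconv : ∀ (s : Finset (ℕ × ℕ)) (m : ℕ),
        Tendsto (fun r => ∫⁻ y, ENNReal.ofReal (tf e s m y) ∂(ν r)) (𝓝[>] 0)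
          (𝓝 (∫⁻ y, ENNReal.ofReal (tf e s m y) ∂(π.condKernel x))) := by
      intro s m
      have hx1 : P (s, m) x := hEP (s, m) x (hxE (s, m))
      rw [hP_def] at hx1
      have hx2 : Tendsto
          (fun r : ℝ => ∫⁻ y, ENNReal.ofReal (fj (s, m) y) ∂(ν r))
          (𝓝[>] 0) (𝓝 (∫⁻ y, ENNReal.ofReal (fj (s, m) y) ∂(π.condKernel x))) := by
        refine hx1.congr' ?_
        filter_upwards [self_mem_nhdsWithin] with r hr
        rw [hνpos r hr]
      -- convert to tf
      have hmeas_tf : Measurable (tf e s m) := (tf_continuous e s m).measurable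
      have heq : ∀ (νv : Measure Y) [IsProbabilityMeasure νv],
          ∫⁻ y, ENNReal.ofReal (fj (s, m) y) ∂νv
            = (∫⁻ y, ENNReal.ofReal (tf e s m y) ∂νv + 1) / 2 := by
        intro νv _
        exact lintegral_half νv hmeas_tf (tf_nonneg e s m)
      simp only [heq] at hx2
      exact tendsto_of_half hx2
    have := tendsto_integral_of_tests he ν (π.condKernel x) hconv g
    refine this.congr' ?_
    filter_upwards [self_mem_nhdsWithin] with r hr
    rw [hνpos r hr]
  · intro A C hA hC
    conv_lhs => rw [← hdis]
    rw [Measure.compProd_apply_prod hA hC]
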